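/- Let J be an integrable almost complex structure on a differential *-calculus (Ω•A, d, *), and suppose that for all p, q ≥ 0 the multiplication map ∧ : Ω^{0,q}A ⊗_A Ω^{p,0}A → Ω^{p,q}A is an isomorphism, with inverse Θ^{p,q}. Then for each p the map ∇̄ := Θ^{p,1}∘∂̄ : Ω^{p,0}A → Ω^{0,1}A ⊗_A Ω^{p,0}A is a ∂̄-operator with vanishing holomorphic curvature, so (Ω^{p,0}A, ∇̄) is a holomorphic left A-module; moreover the p-th Dolbeault complex (Ω^{p,•}A, ∂̄) is isomorphic, as a complex, to the complex (Ω^{0,•}A ⊗_A Ω^{p,0}A, ∇̄), via the multiplication maps ∧. -/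

import Mathlib

noncomputable section

open scoped TensorProduct

/-- A differential `*`-calculus `(Ω•A, d, *)` on the `*`-algebra `A = G 0`:
an ℕ-graded associative ℂ-algebra `Ω` with `Ω⁰A = A = G 0`, generation
`Ωⁿ⁺¹A = A·d(ΩⁿA)`, a degree-one differential `d` with `d² = 0` satisfying the graded
Leibniz rule, and a grade-preserving conjugate-linear involution `starOp` such that
`(dξ)* = d(ξ*)` and `(ξ∧η)* = (−1)^{|ξ||η|} η*∧ξ*` for homogeneous `ξ`, `η`. -/
structure DiffStarCalc (Ω : Type*) [Ring Ω] [Algebra ℂ Ω] where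
  /-- the grading: `G n` is the space of `n`-forms `ΩⁿA`; `G 0 = A`. -/
  G : ℕ → Submodule ℂ Ω
  internal : DirectSum.IsInternal G
  one_mem : (1 : Ω) ∈ G 0
  mul_mem : ∀ {m n : ℕ} {x y : Ω}, x ∈ G m → y ∈ G n → x * y ∈ G (m + n)
  /-- the differential -/
  d : Ω →ₗ[ℂ] Ω
  d_mem : ∀ (n : ℕ), ∀ x ∈ G n, d x ∈ G (n + 1)
  d_d : ∀ x : Ω, d (d x) = 0
  leibniz : ∀ (n : ℕ), ∀ x ∈ G n, ∀ y : Ω,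
      d (x * y) = d x * y + ((-1 : ℂ) ^ n) • (x * d y)
  gen : ∀ n : ℕ, G (n + 1) ≤ Submodule.span ℂ {z : Ω | ∃ a ∈ G 0, ∃ x ∈ G n, z = a * d x}
  /-- the `*`-operation -/
  starOp : Ω → Ω
  starOp_add : ∀ x y : Ω, starOp (x + y) = starOp x + starOp y
  starOp_smul : ∀ (c : ℂ) (x : Ω), starOp (c • x) = (starRingEnd ℂ) c • starOp x
  starOp_starOp : ∀ x : Ω, starOp (starOp x) = x
  starOp_mem : ∀ (n : ℕ), ∀ x ∈ G n, starOp x ∈ G n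
  starOp_mul : ∀ (m n : ℕ), ∀ x ∈ G m, ∀ y ∈ G n,
      starOp (x * y) = ((-1 : ℂ) ^ (m * n)) • (starOp y * starOp x)
  starOp_d : ∀ x : Ω, starOp (d x) = d (starOp x)

/-- An almost complex structure on a differential `*`-calculus: a degree-zero
ℂ-linear derivation `J` of `Ω•A` vanishing on `A = G 0`, with `J² = −1` on `Ω¹A = G 1`
and `J(ξ*) = (Jξ)*` for `ξ ∈ Ω¹A`. -/
structure AlmostComplexCalc (Ω : Type*) [Ring Ω] [Algebra ℂ Ω] extends DiffStarCalc Ω where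
  /-- the almost complex structure -/
  J : Ω →ₗ[ℂ] Ω
  J_mem : ∀ (n : ℕ), ∀ x ∈ G n, J x ∈ G n
  J_deriv : ∀ x y : Ω, J (x * y) = J x * y + x * J y
  J_zero : ∀ x ∈ G 0, J x = 0
  J_sq : ∀ x ∈ G 1, J (J x) = -x
  J_star : ∀ x ∈ G 1, J (starOp x) = starOp (J x)

namespace AlmostComplexCalc

variable {Ω : Type*} [Ring Ω] [Algebra ℂ Ω]

/-- The space of `(p,q)`-forms `Ω^{p,q}A := {ξ ∈ Ω^{p+q}A : Jξ = (p−q)·i·ξ}`. -/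
def pq (C : AlmostComplexCalc Ω) (p q : ℕ) : Submodule ℂ Ω where
  carrier := {x | x ∈ C.G (p + q) ∧ C.J x = (((p : ℂ) - (q : ℂ)) * Complex.I) • x}
  add_mem' := by
    rintro x y ⟨hx1, hx2⟩ ⟨hy1, hy2⟩
    refine ⟨(C.G (p + q)).add_mem hx1 hy1, ?_⟩
    rw [map_add, hx2, hy2, smul_add]
  zero_mem' := ⟨(C.G (p + q)).zero_mem, by rw [map_zero, smul_zero]⟩
  smul_mem' := by
    rintro c x ⟨hx1, hx2⟩
    refine ⟨(C.G (p + q)).smul_mem c hx1, ?_⟩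
    rw [map_smul, hx2, smul_comm]

theorem mem_pq {C : AlmostComplexCalc Ω} {p q : ℕ} {x : Ω} :
    x ∈ C.pq p q ↔ x ∈ C.G (p + q) ∧ C.J x = (((p : ℂ) - (q : ℂ)) * Complex.I) • x :=
  Iff.rfl

/-- Integrability of the almost complex structure:
`d(Ω^{1,0}A) ⊆ Ω^{2,0}A ⊕ Ω^{1,1}A`. -/
def Integrable (C : AlmostComplexCalc Ω) : Prop :=
  ∀ ω ∈ C.pq 1 0, C.d ω ∈ C.pq 2 0 ⊔ C.pq 1 1

end AlmostComplexCalc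

/-- An almost complex structure together with the projections
`π^{p,q} : Ω^{p+q}A → Ω^{p,q}A` realizing the direct sum decomposition
`ΩⁿA = ⊕_{p+q=n} Ω^{p,q}A`. -/
structure ProjCalc (Ω : Type*) [Ring Ω] [Algebra ℂ Ω] extends AlmostComplexCalc Ω where
  /-- the projection onto the `(p,q)`-summand -/
  π : ℕ → ℕ → (Ω →ₗ[ℂ] Ω)
  π_mem_grade : ∀ (p q : ℕ) (x : Ω), π p q x ∈ G (p + q)
  π_eigen : ∀ (p q : ℕ) (x : Ω),
      J (π p q x) = (((p : ℂ) - (q : ℂ)) * Complex.I) • π p q x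
  π_eq_self : ∀ (p q : ℕ), ∀ x ∈ G (p + q),
      J x = (((p : ℂ) - (q : ℂ)) * Complex.I) • x → π p q x = x
  π_zero_of_ne : ∀ (p q n : ℕ), n ≠ p + q → ∀ x ∈ G n, π p q x = 0
  π_orth : ∀ (p q p' q' : ℕ), (p, q) ≠ (p', q') → ∀ x ∈ G (p' + q'),
      J x = (((p' : ℂ) - (q' : ℂ)) * Complex.I) • x → π p q x = 0
  π_sum : ∀ (n : ℕ), ∀ x ∈ G n, x = ∑ k ∈ Finset.range (n + 1), π k (n - k) x

section TensorMachinery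

variable {Ω : Type*} [Ring Ω] [Algebra ℂ Ω]

/-- The data of a left `A`-module structure on `E`, where `A = G 0` is the degree-zero
part of the calculus: a bilinear action of `Ω` on `E` which is unital and associative
on `A`. -/
structure AModData (C : ProjCalc Ω) (E : Type*) [AddCommGroup E] [Module ℂ E] where
  act : Ω →ₗ[ℂ] E →ₗ[ℂ] E
  act_one : ∀ e : E, act 1 e = e
  act_mul : ∀ a ∈ C.G 0, ∀ b ∈ C.G 0, ∀ e : E, act (a * b) e = act a (act b e)

/-- The subspace of relations defining the balanced tensor product `Ω•A ⊗_A E`. -/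
def relSub (C : ProjCalc Ω) {E : Type*} [AddCommGroup E] [Module ℂ E]
    (M : AModData C E) : Submodule ℂ (Ω ⊗[ℂ] E) :=
  Submodule.span ℂ
    {z : Ω ⊗[ℂ] E | ∃ a ∈ C.G 0, ∃ x : Ω, ∃ e : E,
      z = (x * a) ⊗ₜ[ℂ] e - x ⊗ₜ[ℂ] (M.act a e)}

/-- The balanced tensor product `Ω•A ⊗_A E`. -/
abbrev TP (C : ProjCalc Ω) {E : Type*} [AddCommGroup E] [Module ℂ E]
    (M : AModData C E) :=
  (Ω ⊗[ℂ] E) ⧸ relSub C M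

/-- The class of the elementary tensor `x ⊗ e` in `Ω•A ⊗_A E`. -/
def tp (C : ProjCalc Ω) {E : Type*} [AddCommGroup E] [Module ℂ E]
    (M : AModData C E) (x : Ω) (e : E) : TP C M :=
  Submodule.Quotient.mk (x ⊗ₜ[ℂ] e)

/-- Left multiplication (wedging on the left) by `ξ ∈ Ω•A` on `Ω•A ⊗_A E`. -/
def lmulTP (C : ProjCalc Ω) {E : Type*} [AddCommGroup E] [Module ℂ E]
    (M : AModData C E) (ξ : Ω) : TP C M →ₗ[ℂ] TP C M :=
  Submodule.mapQ (relSub C M) (relSub C M)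
    (LinearMap.rTensor E (LinearMap.mulLeft ℂ ξ)) (by
      unfold relSub
      refine Submodule.span_le.mpr ?_
      rintro z ⟨a, ha, x, e, rfl⟩
      simp only [SetLike.mem_coe, Submodule.mem_comap, map_sub, LinearMap.rTensor_tmul,
        LinearMap.mulLeft_apply]
      rw [show ξ * (x * a) = (ξ * x) * a from (mul_assoc ξ x a).symm]
      exact Submodule.subset_span ⟨a, ha, ξ * x, e, rfl⟩)

/-- The map `Ω•A ⊗_A E → Ω•A ⊗_A F` induced by an `A`-module map `φ : E → F`. -/
def TPmap (C : ProjCalc Ω) {E F : Type*} [AddCommGroup E] [Module ℂ E]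
    [AddCommGroup F] [Module ℂ F] (M : AModData C E) (N : AModData C F)
    (φ : E →ₗ[ℂ] F) (hφ : ∀ a ∈ C.G 0, ∀ e : E, φ (M.act a e) = N.act a (φ e)) :
    TP C M →ₗ[ℂ] TP C N :=
  Submodule.mapQ (relSub C M) (relSub C N) (LinearMap.lTensor Ω φ) (by
    unfold relSub
    refine Submodule.span_le.mpr ?_
    rintro z ⟨a, ha, x, e, rfl⟩
    simp only [SetLike.mem_coe, Submodule.mem_comap, map_sub, LinearMap.lTensor_tmul]
    rw [hφ a ha]
    exact Submodule.subset_span ⟨a, ha, x, φ e, rfl⟩)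

/-- The image of `Ω^{0,q}A ⊗_A E` inside `Ω•A ⊗_A E`. -/
def TPdeg (C : ProjCalc Ω) {E : Type*} [AddCommGroup E] [Module ℂ E]
    (M : AModData C E) (q : ℕ) : Submodule ℂ (TP C M) :=
  Submodule.span ℂ {z : TP C M | ∃ ξ ∈ C.pq 0 q, ∃ e : E, z = tp C M ξ e}

/-- The image of `ΩⁿA ⊗_A E` inside `Ω•A ⊗_A E`. -/
def TPdegTot (C : ProjCalc Ω) {E : Type*} [AddCommGroup E] [Module ℂ E]
    (M : AModData C E) (n : ℕ) : Submodule ℂ (TP C M) :=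
  Submodule.span ℂ {z : TP C M | ∃ x ∈ C.G n, ∃ e : E, z = tp C M x e}

/-- A `∂̄`-operator on a left `A`-module `E`: a ℂ-linear map
`∇̄ : E → Ω^{0,1}A ⊗_A E` with `∇̄(a·e) = ∂̄a ⊗ e + a·∇̄e` for all `a ∈ A`. -/
structure DbarOp (C : ProjCalc Ω) {E : Type*} [AddCommGroup E] [Module ℂ E]
    (M : AModData C E) where
  nabla : E →ₗ[ℂ] TP C M
  mem_deg : ∀ e : E, nabla e ∈ TPdeg C M 1
  leibniz : ∀ a ∈ C.G 0, ∀ e : E,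
      nabla (M.act a e) = tp C M (C.π 0 1 (C.d a)) e + lmulTP C M a (nabla e)

/-- The extension of a `∂̄`-operator to the higher degree parts
`Ω^{0,q}A ⊗_A E → Ω^{0,q+1}A ⊗_A E`, characterized by
`∇̄(ξ⊗e) = ∂̄ξ ⊗ e + (−1)^q ξ ∧ ∇̄e`. -/
structure DbarExt (C : ProjCalc Ω) {E : Type*} [AddCommGroup E] [Module ℂ E]
    {M : AModData C E} (D : DbarOp C M) where
  N : ℕ → (TP C M →ₗ[ℂ] TP C M)
  compat : ∀ (q : ℕ), ∀ ξ ∈ C.pq 0 q, ∀ e : E,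
      N q (tp C M ξ e) = tp C M (C.π 0 (q + 1) (C.d ξ)) e
        + ((-1 : ℂ) ^ q) • lmulTP C M ξ (D.nabla e)

end TensorMachinery

/-- The multiplication (wedge) map `Ω•A ⊗_A Ω^{p,0}A → Ω•A`, `ξ ⊗ η ↦ ξ ∧ η`. -/
def wedgeE {Ω : Type*} [Ring Ω] [Algebra ℂ Ω] (C : ProjCalc Ω) (p : ℕ)
    (Mp : AModData C ↥(C.pq p 0))
    (hact : ∀ a ∈ C.G 0, ∀ e : ↥(C.pq p 0), ((Mp.act a e : Ω)) = a * (e : Ω)) :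
    TP C Mp →ₗ[ℂ] Ω :=
  Submodule.liftQ (relSub C Mp)
    ((LinearMap.mul' ℂ Ω).comp (LinearMap.lTensor Ω (C.pq p 0).subtype)) (by
      unfold relSub
      refine Submodule.span_le.mpr ?_
      rintro z ⟨a, ha, x, e, rfl⟩
      simp only [SetLike.mem_coe, LinearMap.mem_ker, map_sub, LinearMap.comp_apply,
        LinearMap.lTensor_tmul, LinearMap.mul'_apply, Submodule.coe_subtype, hact a ha]
      rw [mul_assoc, sub_self])

section Aux

variable {Ω : Type*} [Ring Ω] [Algebra ℂ Ω] (C : ProjCalc Ω)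

lemma pq_mul {a b c d : ℕ} {x y : Ω} (hx : x ∈ C.pq a b) (hy : y ∈ C.pq c d) :
    x * y ∈ C.pq (a + c) (b + d) := by
  refine ⟨?_, ?_⟩
  · have h := C.mul_mem hx.1 hy.1
    have hn : (a + b) + (c + d) = (a + c) + (b + d) := by ring
    rwa [hn] at h
  · rw [C.J_deriv, hx.2, hy.2, smul_mul_assoc, mul_smul_comm, ← add_smul]
    congr 1
    push_cast
    ring

lemma mem_pq00 {a : Ω} (ha : a ∈ C.G 0) : a ∈ C.pq 0 0 := by
  refine ⟨ha, ?_⟩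
  rw [C.J_zero a ha]
  norm_num

lemma pi_mem_pq (a b : ℕ) (x : Ω) : C.π a b x ∈ C.pq a b :=
  ⟨C.π_mem_grade a b x, C.π_eigen a b x⟩

lemma proj_pq_eq {a b : ℕ} {x : Ω} (h : x ∈ C.pq a b) : C.π a b x = x :=
  C.π_eq_self a b x h.1 h.2

lemma proj_pq_ne {a b c d : ℕ} {x : Ω} (h : x ∈ C.pq c d) (hne : (a, b) ≠ (c, d)) :
    C.π a b x = 0 :=
  C.π_orth a b c d hne x h.1 h.2

lemma proj_prod_right {a b n k m : ℕ} {ξ y : Ω} (hξ : ξ ∈ C.pq a b) (hy : y ∈ C.G n)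
    (hkm : k + m = n) :
    C.π (a + k) (b + m) (ξ * y) = ξ * C.π k m y := by
  conv_lhs => rw [C.π_sum n y hy]
  rw [Finset.mul_sum, map_sum]
  have h0 : ∀ j ∈ Finset.range (n + 1), j ≠ k →
      C.π (a + k) (b + m) (ξ * C.π j (n - j) y) = 0 := by
    intro j hj hjk
    refine proj_pq_ne C (pq_mul C hξ (pi_mem_pq C j (n - j) y)) ?_
    intro h
    rw [Prod.mk.injEq] at h
    have hj' := Finset.mem_range.mp hj
    omega
  rw [Finset.sum_eq_single k h0 (fun hk => absurd (Finset.mem_range.mpr (by omega)) hk),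
    show n - k = m from by omega]
  exact proj_pq_eq C (pq_mul C hξ (pi_mem_pq C k m y))

lemma proj_prod_right_ne {a b n c e : ℕ} {ξ y : Ω} (hξ : ξ ∈ C.pq a b) (hy : y ∈ C.G n)
    (hne : ∀ k m : ℕ, k + m = n → (c, e) ≠ (a + k, b + m)) :
    C.π c e (ξ * y) = 0 := by
  conv_lhs => rw [C.π_sum n y hy]
  rw [Finset.mul_sum, map_sum]
  apply Finset.sum_eq_zero
  intro j hj
  refine proj_pq_ne C (pq_mul C hξ (pi_mem_pq C j (n - j) y)) ?_
  exact hne j (n - j) (by have := Finset.mem_range.mp hj; omega)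

lemma proj_prod_left {c d n k m : ℕ} {y e : Ω} (hy : y ∈ C.G n) (he : e ∈ C.pq c d)
    (hkm : k + m = n) :
    C.π (k + c) (m + d) (y * e) = C.π k m y * e := by
  conv_lhs => rw [C.π_sum n y hy]
  rw [Finset.sum_mul, map_sum]
  have h0 : ∀ j ∈ Finset.range (n + 1), j ≠ k →
      C.π (k + c) (m + d) (C.π j (n - j) y * e) = 0 := by
    intro j hj hjk
    refine proj_pq_ne C (pq_mul C (pi_mem_pq C j (n - j) y) he) ?_
    intro h
    rw [Prod.mk.injEq] at h
    have hj' := Finset.mem_range.mp hj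
    omega
  rw [Finset.sum_eq_single k h0 (fun hk => absurd (Finset.mem_range.mpr (by omega)) hk),
    show n - k = m from by omega]
  exact proj_pq_eq C (pq_mul C (pi_mem_pq C k m y) he)

/-- The key Leibniz-projection identity. -/
lemma key_leibniz {p q : ℕ} {ξ e : Ω} (hξ : ξ ∈ C.pq 0 q) (he : e ∈ C.pq p 0) :
    C.π p (q + 1) (C.d (ξ * e)) =
      C.π 0 (q + 1) (C.d ξ) * e + ((-1 : ℂ) ^ q) • (ξ * C.π p 1 (C.d e)) := by
  have hξG : ξ ∈ C.G q := by have h := hξ.1; rwa [Nat.zero_add] at h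
  have heG : e ∈ C.G p := he.1
  rw [C.leibniz q ξ hξG e, map_add, map_smul]
  congr 1
  · have h := proj_prod_left C (C.d_mem q ξ hξG) he (show 0 + (q + 1) = q + 1 by omega)
    rwa [Nat.zero_add, Nat.add_zero] at h
  · congr 1
    have h := proj_prod_right C hξ (C.d_mem p e heG) (show p + 1 = p + 1 from rfl)
    rwa [Nat.zero_add] at h

/-- Monomial filtration: `Wsub C r` is spanned by products of `r` holomorphic
one-forms (with a degree-zero coefficient at the core). -/
def Wsub : ℕ → Submodule ℂ Ω
  | 0 => C.G 0
  | (r + 1) => Submodule.span ℂ {z : Ω | ∃ η ∈ C.pq 1 0, ∃ y ∈ Wsub r, z = η * y}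

lemma Wsub_zero : Wsub C 0 = C.G 0 := rfl

lemma Wsub_succ (r : ℕ) : Wsub C (r + 1) =
    Submodule.span ℂ {z : Ω | ∃ η ∈ C.pq 1 0, ∃ y ∈ Wsub C r, z = η * y} := rfl

lemma Wsub_le_pq : ∀ r : ℕ, Wsub C r ≤ C.pq r 0
  | 0 => fun x hx => mem_pq00 C hx
  | (r + 1) => by
    rw [Wsub_succ]
    apply Submodule.span_le.mpr
    rintro z ⟨η, hη, y, hy, rfl⟩
    have h := pq_mul C hη (Wsub_le_pq r hy)
    rwa [show 1 + r = r + 1 by omega] at h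

lemma Wsub_mul_left {a : Ω} (ha : a ∈ C.G 0) : ∀ r : ℕ, ∀ y ∈ Wsub C r, a * y ∈ Wsub C r
  | 0, y, hy => C.mul_mem ha hy
  | (r + 1), y, hy => by
    rw [Wsub_succ] at hy
    induction hy using Submodule.span_induction with
    | mem z hz =>
      obtain ⟨η, hη, w, hw, rfl⟩ := hz
      rw [← mul_assoc, Wsub_succ]
      refine Submodule.subset_span ⟨a * η, ?_, w, hw, rfl⟩
      have h := pq_mul C (mem_pq00 C ha) hη
      rwa [Nat.zero_add] at h
    | zero => rw [mul_zero]; exact zero_mem _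
    | add u v _ _ hu hv => rw [mul_add]; exact add_mem hu hv
    | smul c u _ hu => rw [mul_smul_comm]; exact Submodule.smul_mem _ c hu

lemma Wsub_d (hint : C.Integrable) (r : ℕ) :
    ∀ z ∈ Wsub C r, C.d z ∈ C.pq (r + 1) 0 ⊔ C.pq r 1 := by
  induction r with
  | zero =>
    intro z hz
    rw [Wsub_zero] at hz
    have hdz : C.d z ∈ C.G 1 := C.d_mem 0 z hz
    have hs := C.π_sum 1 (C.d z) hdz
    rw [Finset.sum_range_succ, Finset.sum_range_succ, Finset.sum_range_zero, zero_add] at hs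
    simp only [Nat.sub_zero, Nat.sub_self] at hs
    rw [hs]
    exact add_mem (Submodule.mem_sup_right (pi_mem_pq C 0 1 _))
      (Submodule.mem_sup_left (pi_mem_pq C 1 0 _))
  | succ r ih =>
    intro z hz
    rw [Wsub_succ] at hz
    induction hz using Submodule.span_induction with
    | mem w hw =>
      obtain ⟨η, hη, y, hy, rfl⟩ := hw
      have hηG : η ∈ C.G 1 := hη.1
      rw [C.leibniz 1 η hηG y]
      apply add_mem
      · obtain ⟨s, hs, t, ht, hst⟩ := Submodule.mem_sup.mp (hint η hη)
        rw [← hst, add_mul]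
        apply add_mem
        · have h := pq_mul C hs (Wsub_le_pq C r hy)
          exact Submodule.mem_sup_left (by rwa [show 2 + r = r + 1 + 1 by omega] at h)
        · have h := pq_mul C ht (Wsub_le_pq C r hy)
          exact Submodule.mem_sup_right (by rwa [show 1 + r = r + 1 by omega] at h)
      · apply Submodule.smul_mem
        obtain ⟨u, hu, v, hv, huv⟩ := Submodule.mem_sup.mp (ih y hy)
        rw [← huv, mul_add]
        apply add_mem
        · have h := pq_mul C hη hu
          exact Submodule.mem_sup_left (by rwa [show 1 + (r + 1) = r + 1 + 1 by omega] at h)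
        · have h := pq_mul C hη hv
          exact Submodule.mem_sup_right (by rwa [show 1 + r = r + 1 by omega] at h)
    | zero => rw [map_zero]; exact zero_mem _
    | add u v _ _ hu hv => rw [map_add]; exact add_mem hu hv
    | smul c u _ hu => rw [map_smul]; exact Submodule.smul_mem _ c hu

lemma proj_d_mem_Wsub (r : ℕ) : ∀ x ∈ C.G r, C.π (r + 1) 0 (C.d x) ∈ Wsub C (r + 1) := by
  induction r with
  | zero =>
    intro x hx
    rw [Wsub_succ]
    have h1 : C.π 1 0 (C.d x) = C.π 1 0 (C.d x) * 1 := (mul_one _).symm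
    rw [h1]
    exact Submodule.subset_span ⟨_, pi_mem_pq C 1 0 (C.d x), 1, C.one_mem, rfl⟩
  | succ r ih =>
    intro x hx
    have hg := C.gen r hx
    clear hx
    induction hg using Submodule.span_induction with
    | mem z hz =>
      obtain ⟨a, ha, w, hw, rfl⟩ := hz
      have hdd : C.d (a * C.d w) = C.d a * C.d w := by
        rw [C.leibniz 0 a ha (C.d w), C.d_d w]
        simp
      rw [hdd]
      have hda : C.d a ∈ C.G 1 := C.d_mem 0 a ha
      have hsa := C.π_sum 1 (C.d a) hda
      rw [Finset.sum_range_succ, Finset.sum_range_succ, Finset.sum_range_zero, zero_add] at hsa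
      simp only [Nat.sub_zero, Nat.sub_self] at hsa
      rw [hsa, add_mul, map_add]
      have h1 : C.π (r + 1 + 1) 0 (C.π 0 1 (C.d a) * C.d w) = 0 := by
        apply proj_prod_right_ne C (pi_mem_pq C 0 1 (C.d a)) (C.d_mem r w hw)
        intro k m hkm h
        rw [Prod.mk.injEq] at h
        omega
      rw [h1, zero_add]
      have h2 := proj_prod_right C (pi_mem_pq C 1 0 (C.d a)) (C.d_mem r w hw)
        (show (r + 1) + 0 = r + 1 from rfl)
      rw [show 1 + (r + 1) = r + 1 + 1 by omega] at h2
      rw [h2, Wsub_succ]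
      exact Submodule.subset_span ⟨_, pi_mem_pq C 1 0 (C.d a), _, ih w hw, rfl⟩
    | zero => rw [map_zero, map_zero]; exact zero_mem _
    | add u v _ _ hu hv => rw [map_add, map_add]; exact add_mem hu hv
    | smul c u _ hu => rw [map_smul, map_smul]; exact Submodule.smul_mem _ c hu

lemma pq_le_Wsub : ∀ r : ℕ, ∀ x ∈ C.pq r 0, x ∈ Wsub C r := by
  intro r
  cases r with
  | zero => intro x hx; exact hx.1
  | succ r =>
    intro x hx
    rw [← proj_pq_eq C hx]
    have hg := C.gen r hx.1
    clear hx
    induction hg using Submodule.span_induction with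
    | mem z hz =>
      obtain ⟨a, ha, w, hw, rfl⟩ := hz
      have h := proj_prod_right C (mem_pq00 C ha) (C.d_mem r w hw)
        (show (r + 1) + 0 = r + 1 from rfl)
      rw [Nat.zero_add] at h
      rw [h]
      exact Wsub_mul_left C ha (r + 1) _ (proj_d_mem_Wsub C r w hw)
    | zero => rw [map_zero]; exact zero_mem _
    | add u v _ _ hu hv => rw [map_add]; exact add_mem hu hv
    | smul c u _ hu => rw [map_smul]; exact Submodule.smul_mem _ c hu

lemma d_pq_r0 (hint : C.Integrable) {r : ℕ} {ω : Ω} (hω : ω ∈ C.pq r 0) :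
    C.d ω ∈ C.pq (r + 1) 0 ⊔ C.pq r 1 :=
  Wsub_d C hint r ω (pq_le_Wsub C r ω hω)

lemma curv_zero (hint : C.Integrable) {p : ℕ} {e : Ω} (he : e ∈ C.pq p 0) :
    C.π p 2 (C.d (C.π p 1 (C.d e))) = 0 := by
  obtain ⟨u, hu, v, hv, huv⟩ := Submodule.mem_sup.mp (d_pq_r0 C hint he)
  have hπ : C.π p 1 (C.d e) = v := by
    rw [← huv, map_add, proj_pq_ne C hu (by intro h; rw [Prod.mk.injEq] at h; omega),
      zero_add, proj_pq_eq C hv]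
  rw [hπ]
  have hdv : C.d v = -C.d u := by
    have h0 : C.d u + C.d v = 0 := by
      have h1 : C.d (C.d e) = 0 := C.d_d e
      rw [← huv, map_add] at h1
      exact h1
    exact eq_neg_of_add_eq_zero_right h0
  rw [hdv, map_neg]
  obtain ⟨s, hs, t, ht, hst⟩ := Submodule.mem_sup.mp (d_pq_r0 C hint hu)
  rw [← hst, map_add, proj_pq_ne C hs (by intro h; rw [Prod.mk.injEq] at h; omega),
    proj_pq_ne C ht (by intro h; rw [Prod.mk.injEq] at h; omega), add_zero, neg_zero]

end Aux
/-- Let `J` be an integrable almost complex structure on a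
differential `*`-calculus `(Ω•A, d, *)`, and suppose that for all `q ≥ 0` the
multiplication map `∧ : Ω^{0,q}A ⊗_A Ω^{p,0}A → Ω^{p,q}A` is an isomorphism (with
inverse `Θ^{p,q}`).  Then the map `∇̄ := Θ^{p,1}∘∂̄ : Ω^{p,0}A → Ω^{0,1}A ⊗_A Ω^{p,0}A`
(given here as the data `Dn` characterized by `Dn ω ∈ Ω^{0,1}A ⊗_A Ω^{p,0}A` and
`∧(Dn ω) = ∂̄ω`) is a `∂̄`-operator with vanishing holomorphic curvature, so
`(Ω^{p,0}A, ∇̄)` is a holomorphic left `A`-module; moreover the `p`-th Dolbeault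
complex `(Ω^{p,•}A, ∂̄)` is isomorphic, as a complex, to
`(Ω^{0,•}A ⊗_A Ω^{p,0}A, ∇̄)`, via the multiplication maps `∧`. -/
theorem statement17 {Ω : Type*} [Ring Ω] [Algebra ℂ Ω] (C : ProjCalc Ω)
    (hint : C.Integrable) (p : ℕ)
    -- the left A-module Ω^{p,0}A
    (Mp : AModData C ↥(C.pq p 0))
    (hact : ∀ a ∈ C.G 0, ∀ e : ↥(C.pq p 0), ((Mp.act a e : Ω)) = a * (e : Ω))
    -- hypothesis: ∧ : Ω^{0,q}A ⊗_A Ω^{p,0}A → Ω^{p,q}A is an isomorphism for all q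
    (hTheta : ∀ q : ℕ,
      (∀ z ∈ TPdeg C Mp q, wedgeE C p Mp hact z = 0 → z = 0) ∧
      (∀ ω ∈ C.pq p q, ∃ z ∈ TPdeg C Mp q, wedgeE C p Mp hact z = ω))
    -- the map ∇̄ := Θ^{p,1}∘∂̄
    (Dn : ↥(C.pq p 0) →ₗ[ℂ] TP C Mp)
    (hDn : ∀ e : ↥(C.pq p 0),
      Dn e ∈ TPdeg C Mp 1 ∧ wedgeE C p Mp hact (Dn e) = C.π p 1 (C.d (e : Ω)))
    -- the extension of ∇̄ to Ω^{0,q}A ⊗_A Ω^{p,0}A: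
    -- ∇̄(ξ⊗e) = ∂̄ξ ⊗ e + (−1)^q ξ ∧ ∇̄e
    (NB : ℕ → (TP C Mp →ₗ[ℂ] TP C Mp))
    (hNB : ∀ (q : ℕ), ∀ ξ ∈ C.pq 0 q, ∀ e : ↥(C.pq p 0),
      NB q (tp C Mp ξ e) = tp C Mp (C.π 0 (q + 1) (C.d ξ)) e
        + ((-1 : ℂ) ^ q) • lmulTP C Mp ξ (Dn e)) :
    -- ∇̄ satisfies the ∂̄-Leibniz rule, so it is a ∂̄-operator on Ω^{p,0}A
    (∀ a ∈ C.G 0, ∀ e : ↥(C.pq p 0),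
        Dn (Mp.act a e) = tp C Mp (C.π 0 1 (C.d a)) e + lmulTP C Mp a (Dn e))
    -- its holomorphic curvature vanishes, i.e. (Ω^{p,0}A, ∇̄) is holomorphic
    ∧ (∀ e : ↥(C.pq p 0), NB 1 (Dn e) = 0)
    -- the multiplication maps ∧ intertwine ∇̄ with ∂̄ ...
    ∧ (∀ q : ℕ, ∀ z ∈ TPdeg C Mp q,
        C.π p (q + 1) (C.d (wedgeE C p Mp hact z)) = wedgeE C p Mp hact (NB q z))
    -- ... and are bijections Ω^{0,q}A ⊗_A Ω^{p,0}A → Ω^{p,q}A, giving an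
    -- isomorphism of complexes
    ∧ (∀ q : ℕ, Set.BijOn (wedgeE C p Mp hact) (TPdeg C Mp q) (C.pq p q)) := by
  -- basic computation lemmas for the tensor side
  have hwtp : ∀ (x : Ω) (e : ↥(C.pq p 0)),
      wedgeE C p Mp hact (tp C Mp x e) = x * (e : Ω) := by
    intro x e
    simp [wedgeE, tp]
  have hlmul_tp : ∀ (ξ x : Ω) (e : ↥(C.pq p 0)),
      lmulTP C Mp ξ (tp C Mp x e) = tp C Mp (ξ * x) e := by
    intro ξ x e
    simp [lmulTP, tp]
  have hwl : ∀ (ξ : Ω) (z : TP C Mp),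
      wedgeE C p Mp hact (lmulTP C Mp ξ z) = ξ * wedgeE C p Mp hact z := by
    intro ξ z
    obtain ⟨t, rfl⟩ := Submodule.Quotient.mk_surjective _ z
    induction t using TensorProduct.induction_on with
    | zero =>
      simp
    | tmul x e =>
      have h1 : (Submodule.Quotient.mk (x ⊗ₜ[ℂ] e) : TP C Mp) = tp C Mp x e := rfl
      rw [h1, hlmul_tp, hwtp, hwtp, mul_assoc]
    | add u v hu hv =>
      rw [Submodule.Quotient.mk_add, map_add, map_add, map_add, hu, hv, mul_add]
  -- wedge maps (TPdeg q) into Ω^{p,q}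
  have hwdeg : ∀ q : ℕ, ∀ z ∈ TPdeg C Mp q, wedgeE C p Mp hact z ∈ C.pq p q := by
    intro q z hz
    unfold TPdeg at hz
    induction hz using Submodule.span_induction with
    | mem w hw =>
      obtain ⟨ξ, hξ, e, rfl⟩ := hw
      rw [hwtp]
      have h := pq_mul C hξ e.2
      rwa [Nat.zero_add, Nat.add_zero] at h
    | zero => rw [map_zero]; exact zero_mem _
    | add u v _ _ hu hv => rw [map_add]; exact add_mem hu hv
    | smul c u _ hu => rw [map_smul]; exact Submodule.smul_mem _ c hu
  -- left multiplication degree shift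
  have hlmuldeg : ∀ (b q : ℕ), ∀ ξ ∈ C.pq 0 b, ∀ z ∈ TPdeg C Mp q,
      lmulTP C Mp ξ z ∈ TPdeg C Mp (b + q) := by
    intro b q ξ hξ z hz
    unfold TPdeg at hz
    induction hz using Submodule.span_induction with
    | mem w hw =>
      obtain ⟨η, hη, e, rfl⟩ := hw
      rw [hlmul_tp]
      refine Submodule.subset_span ⟨ξ * η, ?_, e, rfl⟩
      exact pq_mul C hξ hη
    | zero => rw [map_zero]; exact zero_mem _
    | add u v _ _ hu hv => rw [map_add]; exact add_mem hu hv
    | smul c u _ hu => rw [map_smul]; exact Submodule.smul_mem _ c hu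
  -- NB maps TPdeg q into TPdeg (q+1)
  have hNBdeg : ∀ q : ℕ, ∀ z ∈ TPdeg C Mp q, NB q z ∈ TPdeg C Mp (q + 1) := by
    intro q z hz
    unfold TPdeg at hz
    induction hz using Submodule.span_induction with
    | mem w hw =>
      obtain ⟨ξ, hξ, e, rfl⟩ := hw
      rw [hNB q ξ hξ e]
      apply add_mem
      · exact Submodule.subset_span ⟨_, pi_mem_pq C 0 (q + 1) _, e, rfl⟩
      · apply Submodule.smul_mem
        exact hlmuldeg q 1 ξ hξ (Dn e) (hDn e).1
    | zero => rw [map_zero]; exact zero_mem _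
    | add u v _ _ hu hv => rw [map_add]; exact add_mem hu hv
    | smul c u _ hu => rw [map_smul]; exact Submodule.smul_mem _ c hu
  -- injectivity of wedge on TPdeg q
  have hinj : ∀ q : ℕ, ∀ z ∈ TPdeg C Mp q, ∀ z' ∈ TPdeg C Mp q,
      wedgeE C p Mp hact z = wedgeE C p Mp hact z' → z = z' := by
    intro q z hz z' hz' h
    have hmem : z - z' ∈ TPdeg C Mp q := sub_mem hz hz'
    have h0 : wedgeE C p Mp hact (z - z') = 0 := by rw [map_sub, h, sub_self]
    have := (hTheta q).1 _ hmem h0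
    exact sub_eq_zero.mp this
  -- part 3: intertwining
  have key3 : ∀ q : ℕ, ∀ z ∈ TPdeg C Mp q,
      C.π p (q + 1) (C.d (wedgeE C p Mp hact z)) = wedgeE C p Mp hact (NB q z) := by
    intro q z hz
    unfold TPdeg at hz
    induction hz using Submodule.span_induction with
    | mem w hw =>
      obtain ⟨ξ, hξ, e, rfl⟩ := hw
      rw [hwtp, hNB q ξ hξ e, map_add, map_smul, hwtp, hwl, (hDn e).2]
      exact key_leibniz C hξ e.2
    | zero => simp
    | add u v _ _ hu hv => simp only [map_add]; rw [hu, hv]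
    | smul c u _ hu => simp only [map_smul]; rw [hu]
  -- part 1: Leibniz rule for Dn
  have part1 : ∀ a ∈ C.G 0, ∀ e : ↥(C.pq p 0),
      Dn (Mp.act a e) = tp C Mp (C.π 0 1 (C.d a)) e + lmulTP C Mp a (Dn e) := by
    intro a ha e
    have hm1 : Dn (Mp.act a e) ∈ TPdeg C Mp 1 := (hDn _).1
    have hm2 : tp C Mp (C.π 0 1 (C.d a)) e + lmulTP C Mp a (Dn e) ∈ TPdeg C Mp 1 := by
      apply add_mem
      · exact Submodule.subset_span ⟨_, pi_mem_pq C 0 1 _, e, rfl⟩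
      · exact hlmuldeg 0 1 a (mem_pq00 C ha) (Dn e) (hDn e).1
    apply hinj 1 _ hm1 _ hm2
    rw [map_add, hwl, (hDn _).2, (hDn _).2, hact a ha e]
    have h := key_leibniz C (mem_pq00 C ha) e.2
    simpa [hwtp] using h
  -- part 2: vanishing holomorphic curvature
  have part2 : ∀ e : ↥(C.pq p 0), NB 1 (Dn e) = 0 := by
    intro e
    have hm : NB 1 (Dn e) ∈ TPdeg C Mp 2 := hNBdeg 1 _ (hDn e).1
    apply (hTheta 2).1 _ hm
    rw [← key3 1 _ (hDn e).1, (hDn e).2]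
    exact curv_zero C hint e.2
  -- part 4: bijectivity
  have part4 : ∀ q : ℕ, Set.BijOn (wedgeE C p Mp hact) (TPdeg C Mp q) (C.pq p q) := by
    intro q
    refine ⟨fun z hz => hwdeg q z hz, fun z hz z' hz' h => hinj q z hz z' hz' h, ?_⟩
    intro ω hω
    obtain ⟨z, hz, hwz⟩ := (hTheta q).2 ω hω
    exact ⟨z, hz, hwz⟩
  exact ⟨part1, part2, key3, part4⟩
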